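/- Let W = ℤ/2ℤ × ℤ/2ℤ act on D = ℂ× × ℂ× with generators s₁: (x,y) ↦ (x⁻¹,y⁻¹) and s₂: (x,y) ↦ (y,x). Then the extended quotient D//W is in bijection with the disjoint union of D/W, the quotient of the diagonal {(λ,λ)} by λ ↦ λ⁻¹, the quotient of the antidiagonal {(λ,λ⁻¹)} by λ ↦ λ⁻¹, and three additional points corresponding to the W-orbits {(1,1)}, {(-1,-1)}, {(1,-1),(-1,1)} in the fixed set of s₁. -/

import Mathlib

/-- The set `X~ = {(γ,x) : γ • x = x}`. -/
def Xtilde (Γ X : Type*) [Group Γ] [MulAction Γ X] : Type _ :=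
  {p : Γ × X // p.1 • p.2 = p.2}

instance xtildeSMul (Γ X : Type*) [Group Γ] [MulAction Γ X] : SMul Γ (Xtilde Γ X) :=
  ⟨fun α p => ⟨(α * p.val.1 * α⁻¹, α • p.val.2), by
    have h := p.property
    show (α * p.val.1 * α⁻¹) • (α • p.val.2) = α • p.val.2
    rw [mul_smul, mul_smul, inv_smul_smul, h]⟩⟩

instance xtildeAction (Γ X : Type*) [Group Γ] [MulAction Γ X] : MulAction Γ (Xtilde Γ X) where
  one_smul p := Subtype.ext (by
    show ((1 : Γ) * p.val.1 * 1⁻¹, (1 : Γ) • p.val.2) = p.val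
    simp)
  mul_smul a b p := Subtype.ext (by
    show ((a * b) * p.val.1 * (a * b)⁻¹, (a * b) • p.val.2)
        = (a * (b * p.val.1 * b⁻¹) * a⁻¹, a • b • p.val.2)
    rw [mul_smul]
    congr 1
    group)

/-- The extended quotient `X // Γ`. -/
def ExtQuot (Γ X : Type*) [Group Γ] [MulAction Γ X] : Type _ :=
  Quotient (MulAction.orbitRel Γ (Xtilde Γ X))

/-- The ordinary quotient `X / Γ`. -/
def OrdQuot (Γ X : Type*) [Group Γ] [MulAction Γ X] : Type _ :=
  Quotient (MulAction.orbitRel Γ X)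

/-- The projection `π : X // Γ → X / Γ`. -/
def piMap (Γ X : Type*) [Group Γ] [MulAction Γ X] : ExtQuot Γ X → OrdQuot Γ X :=
  Quotient.map (fun p => p.val.2) (by
    rintro p q ⟨α, hα⟩
    exact ⟨α, congrArg (fun r : Xtilde Γ X => r.val.2) hα⟩)


/-- The action map of the Klein four-group `ℤ/2ℤ × ℤ/2ℤ` on `D = ℂˣ × ℂˣ`: the first
generator acts by `(x,y) ↦ (x⁻¹,y⁻¹)` and the second by `(x,y) ↦ (y,x)`. -/
def kleinSmul (g : Multiplicative (ZMod 2) × Multiplicative (ZMod 2)) (p : ℂˣ × ℂˣ) :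
    ℂˣ × ℂˣ :=
  if Multiplicative.toAdd g.1 = 0 then
    (if Multiplicative.toAdd g.2 = 0 then p else (p.2, p.1))
  else
    (if Multiplicative.toAdd g.2 = 0 then (p.1⁻¹, p.2⁻¹) else (p.2⁻¹, p.1⁻¹))

instance kleinSMulInst : SMul (Multiplicative (ZMod 2) × Multiplicative (ZMod 2)) (ℂˣ × ℂˣ) :=
  ⟨kleinSmul⟩

instance kleinAction :
    MulAction (Multiplicative (ZMod 2) × Multiplicative (ZMod 2)) (ℂˣ × ℂˣ) where
  one_smul p := by
    show kleinSmul 1 p = p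
    simp [kleinSmul]
  mul_smul a b p := by
    show kleinSmul (a * b) p = kleinSmul a (kleinSmul b p)
    have h : ∀ c : ZMod 2, c = 0 ∨ c = 1 := by decide
    rcases h (Multiplicative.toAdd a.1) with h1 | h1 <;>
      rcases h (Multiplicative.toAdd a.2) with h2 | h2 <;>
        rcases h (Multiplicative.toAdd b.1) with h3 | h3 <;>
          rcases h (Multiplicative.toAdd b.2) with h4 | h4 <;>
            simp [kleinSmul, Prod.ext_iff, toAdd_mul, h1, h2, h3, h4,
              show (1 + 1 : ZMod 2) = 0 by decide, show (0 + 1 : ZMod 2) = 1 by decide,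
              show (1 + 0 : ZMod 2) = 1 by decide, show (1 : ZMod 2) ≠ 0 by decide]

/-- The first generator `s₁ : (x,y) ↦ (x⁻¹,y⁻¹)`. -/
def s₁ : Multiplicative (ZMod 2) × Multiplicative (ZMod 2) :=
  (Multiplicative.ofAdd 1, Multiplicative.ofAdd 0)

/-- The second generator `s₂ : (x,y) ↦ (y,x)`. -/
def s₂ : Multiplicative (ZMod 2) × Multiplicative (ZMod 2) :=
  (Multiplicative.ofAdd 0, Multiplicative.ofAdd 1)


/-- The group `ℤ/2ℤ` acting on `ℂˣ` with the nontrivial element acting by `λ ↦ λ⁻¹`. -/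
instance z2InvAction : MulAction (Multiplicative (ZMod 2)) ℂˣ where
  smul g x := if Multiplicative.toAdd g = 0 then x else x⁻¹
  one_smul x := by
    show (if Multiplicative.toAdd (1 : Multiplicative (ZMod 2)) = 0 then x else x⁻¹) = x
    simp
  mul_smul a b x := by
    show (if Multiplicative.toAdd (a * b) = 0 then x else x⁻¹) =
      (if Multiplicative.toAdd a = 0 then
        (if Multiplicative.toAdd b = 0 then x else x⁻¹)
       else (if Multiplicative.toAdd b = 0 then x else x⁻¹)⁻¹)
    have h : ∀ c : ZMod 2, c = 0 ∨ c = 1 := by decide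
    rcases h (Multiplicative.toAdd a) with ha | ha <;>
      rcases h (Multiplicative.toAdd b) with hb | hb <;>
        simp [toAdd_mul, ha, hb, show (1 + 1 : ZMod 2) = 0 by decide,
          show (0 + 1 : ZMod 2) = 1 by decide, show (1 + 0 : ZMod 2) = 1 by decide,
          show (1 : ZMod 2) ≠ 0 by decide]


namespace ExtQuotKleinAux

abbrev W : Type := Multiplicative (ZMod 2) × Multiplicative (ZMod 2)
abbrev Z2 : Type := Multiplicative (ZMod 2)
abbrev D : Type := ℂˣ × ℂˣ

abbrev Target : Type :=
  OrdQuot W D ⊕ OrdQuot Z2 ℂˣ ⊕ OrdQuot Z2 ℂˣ ⊕ Fin 3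

def mkD (d : D) : OrdQuot W D := Quotient.mk (MulAction.orbitRel W D) d
def mkU (x : ℂˣ) : OrdQuot Z2 ℂˣ := Quotient.mk (MulAction.orbitRel Z2 ℂˣ) x

/-- classification of the 4 points `(±1, ±1)` into 3 orbits -/
noncomputable def c (d : D) : Fin 3 :=
  if d.1 = d.2 then (if d.1 = 1 then 0 else 1) else 2

noncomputable def F0 (p : Xtilde W D) : Target :=
  if p.val.1 = 1 then Sum.inl (mkD p.val.2)
  else if p.val.1 = s₂ then Sum.inr (Sum.inl (mkU p.val.2.1))
  else if p.val.1 = s₁ * s₂ then Sum.inr (Sum.inr (Sum.inl (mkU p.val.2.1)))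
  else Sum.inr (Sum.inr (Sum.inr (c p.val.2)))

lemma wcases' : ∀ w : W, w = 1 ∨ w = s₂ ∨ w = s₁ * s₂ ∨ w = s₁ := by decide
lemma wcases (w : W) : w = 1 ∨ w = s₂ ∨ w = s₁ * s₂ ∨ w = s₁ := wcases' w

lemma zcases' : ∀ a : ZMod 2, a = 0 ∨ a = 1 := by decide
lemma zcases (a : ZMod 2) : a = 0 ∨ a = 1 := zcases' a

lemma neg_one_ne_one : (-1 : ℂˣ) ≠ 1 := by
  intro h
  have := congrArg Units.val h
  rw [Units.val_neg, Units.val_one] at this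
  norm_num at this

lemma F0_eval_one (p : Xtilde W D) (h : p.val.1 = 1) :
    F0 p = Sum.inl (mkD p.val.2) := by simp [F0, h]

lemma F0_eval_s₂ (p : Xtilde W D) (h : p.val.1 = s₂) :
    F0 p = Sum.inr (Sum.inl (mkU p.val.2.1)) := by
  simp [F0, h, show s₂ ≠ 1 by decide]

lemma F0_eval_s₁s₂ (p : Xtilde W D) (h : p.val.1 = s₁ * s₂) :
    F0 p = Sum.inr (Sum.inr (Sum.inl (mkU p.val.2.1))) := by
  simp [F0, h, show s₁ * s₂ ≠ 1 by decide, show s₁ * s₂ ≠ s₂ by decide]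

lemma F0_eval_s₁ (p : Xtilde W D) (h : p.val.1 = s₁) :
    F0 p = Sum.inr (Sum.inr (Sum.inr (c p.val.2))) := by
  simp [F0, h, show s₁ ≠ 1 by decide, show s₁ ≠ s₂ by decide,
    show s₁ ≠ s₁ * s₂ by decide]

lemma z2smul_def (g : Z2) (x : ℂˣ) :
    g • x = if Multiplicative.toAdd g = 0 then x else x⁻¹ := rfl

lemma wsmul_def (α : W) (d : D) : α • d = kleinSmul α d := rfl

lemma xt_smul_val (α : W) (p : Xtilde W D) :
    (α • p).val = (p.val.1, kleinSmul α p.val.2) := by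
  show (α * p.val.1 * α⁻¹, α • p.val.2) = _
  rw [mul_comm α p.val.1, mul_inv_cancel_right]
  rfl

lemma fix_s₂ (p : Xtilde W D) (h : p.val.1 = s₂) : p.val.2.2 = p.val.2.1 := by
  have hp := p.property
  rw [h] at hp
  have h2 : kleinSmul s₂ p.val.2 = p.val.2 := hp
  simp [kleinSmul, s₂, show (1 : ZMod 2) ≠ 0 by decide, Prod.ext_iff] at h2
  exact h2.1

lemma fix_s₁s₂ (p : Xtilde W D) (h : p.val.1 = s₁ * s₂) :
    p.val.2.2 = p.val.2.1⁻¹ := by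
  have hp := p.property
  rw [h] at hp
  have h2 : kleinSmul (s₁ * s₂) p.val.2 = p.val.2 := hp
  simp [kleinSmul, s₁, s₂, show (1 : ZMod 2) ≠ 0 by decide, Prod.ext_iff] at h2
  rw [← h2.1, inv_inv]

lemma fix_s₁ (p : Xtilde W D) (h : p.val.1 = s₁) :
    p.val.2.1⁻¹ = p.val.2.1 ∧ p.val.2.2⁻¹ = p.val.2.2 := by
  have hp := p.property
  rw [h] at hp
  have h2 : kleinSmul s₁ p.val.2 = p.val.2 := hp
  simpa [kleinSmul, s₁, s₂, show (1 : ZMod 2) ≠ 0 by decide, Prod.ext_iff] using h2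

lemma unit_pm (x : ℂˣ) (h : x⁻¹ = x) : x = 1 ∨ x = -1 := by
  have h2 : x * x = 1 := by nth_rewrite 1 [← h]; exact inv_mul_cancel x
  have h3 : (x : ℂ) * (x : ℂ) = 1 := by
    have := congrArg Units.val h2
    rwa [Units.val_mul, Units.val_one] at this
  rcases mul_self_eq_one_iff.mp h3 with h4 | h4
  · exact Or.inl (Units.ext (by simpa using h4))
  · exact Or.inr (Units.ext (by simpa using h4))

lemma c_swap (d : D) : c (d.2, d.1) = c d := by
  unfold c
  rcases eq_or_ne d.1 d.2 with h | h
  · simp [h]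
  · simp [h, Ne.symm h]

lemma F0_smul (α : W) (p : Xtilde W D) : F0 (α • p) = F0 p := by
  have hval := xt_smul_val α p
  have hfst : (α • p).val.1 = p.val.1 := by rw [hval]
  have hsnd : (α • p).val.2 = kleinSmul α p.val.2 := by rw [hval]
  rcases wcases p.val.1 with hp | hp | hp | hp
  · rw [F0_eval_one _ (hfst.trans hp), F0_eval_one _ hp, hsnd]
    exact congrArg Sum.inl (Quotient.sound ⟨α, rfl⟩)
  · rw [F0_eval_s₂ _ (hfst.trans hp), F0_eval_s₂ _ hp, hsnd]
    refine congrArg (fun t => Sum.inr (Sum.inl t)) (Quotient.sound ⟨α.1, ?_⟩)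
    have hd := fix_s₂ p hp
    show (if Multiplicative.toAdd α.1 = 0 then p.val.2.1 else p.val.2.1⁻¹) = _
    rcases zcases (Multiplicative.toAdd α.1) with h1 | h1 <;>
      rcases zcases (Multiplicative.toAdd α.2) with h2 | h2 <;>
        simp [kleinSmul, h1, h2, hd, show (1 : ZMod 2) ≠ 0 by decide]
  · rw [F0_eval_s₁s₂ _ (hfst.trans hp), F0_eval_s₁s₂ _ hp, hsnd]
    refine congrArg (fun t => Sum.inr (Sum.inr (Sum.inl t))) (Quotient.sound ⟨α.1 * α.2, ?_⟩)
    have hd := fix_s₁s₂ p hp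
    show (if Multiplicative.toAdd (α.1 * α.2) = 0 then p.val.2.1 else p.val.2.1⁻¹) = _
    rcases zcases (Multiplicative.toAdd α.1) with h1 | h1 <;>
      rcases zcases (Multiplicative.toAdd α.2) with h2 | h2 <;>
        simp [kleinSmul, toAdd_mul, h1, h2, hd, show (1 : ZMod 2) ≠ 0 by decide,
          show (1 + 1 : ZMod 2) = 0 by decide]
  · rw [F0_eval_s₁ _ (hfst.trans hp), F0_eval_s₁ _ hp, hsnd]
    refine congrArg (fun t => Sum.inr (Sum.inr (Sum.inr t))) ?_
    obtain ⟨h1, h2⟩ := fix_s₁ p hp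
    rcases zcases (Multiplicative.toAdd α.1) with ha | ha <;>
      rcases zcases (Multiplicative.toAdd α.2) with hb | hb <;>
        simp [kleinSmul, ha, hb, h1, h2, show (1 : ZMod 2) ≠ 0 by decide, c_swap]

noncomputable def F : ExtQuot W D → Target :=
  Quotient.lift F0 (by
    rintro p q ⟨α, rfl⟩
    exact F0_smul α q)

lemma F_mk (p : Xtilde W D) : F (Quotient.mk _ p) = F0 p := rfl

lemma F_inj : Function.Injective F := by
  intro x y
  refine Quotient.inductionOn₂ x y (fun p q h => ?_)
  rw [F_mk, F_mk] at h
  apply Quotient.sound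
  rcases wcases p.val.1 with hp | hp | hp | hp <;>
    rcases wcases q.val.1 with hq | hq | hq | hq
  · -- both 1
    rw [F0_eval_one _ hp, F0_eval_one _ hq] at h
    obtain ⟨α, hα⟩ := Quotient.exact (Sum.inl.inj h)
    refine ⟨α, Subtype.ext ?_⟩
    rw [xt_smul_val]
    exact Prod.ext (hq.trans hp.symm) hα
  · rw [F0_eval_one _ hp, F0_eval_s₂ _ hq] at h; simp at h
  · rw [F0_eval_one _ hp, F0_eval_s₁s₂ _ hq] at h; simp at h
  · rw [F0_eval_one _ hp, F0_eval_s₁ _ hq] at h; simp at h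
  · rw [F0_eval_s₂ _ hp, F0_eval_one _ hq] at h; simp at h
  · -- both s₂
    rw [F0_eval_s₂ _ hp, F0_eval_s₂ _ hq] at h
    simp only [Sum.inr.injEq, Sum.inl.injEq] at h
    obtain ⟨g, hg⟩ := Quotient.exact h
    simp only [z2smul_def] at hg
    have hdp := fix_s₂ p hp
    have hdq := fix_s₂ q hq
    rcases zcases (Multiplicative.toAdd g) with h1 | h1
    · rw [if_pos h1] at hg
      refine ⟨1, Subtype.ext ?_⟩
      rw [xt_smul_val]
      refine Prod.ext (hq.trans hp.symm) (Prod.ext ?_ ?_)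
      · simpa [kleinSmul] using hg
      · simp [kleinSmul, hdp, hdq, hg]
    · rw [if_neg (by rw [h1]; decide)] at hg
      refine ⟨s₁, Subtype.ext ?_⟩
      rw [xt_smul_val]
      refine Prod.ext (hq.trans hp.symm) (Prod.ext ?_ ?_)
      · simpa [kleinSmul, s₁, show (1 : ZMod 2) ≠ 0 by decide] using hg
      · simp [kleinSmul, s₁, show (1 : ZMod 2) ≠ 0 by decide, hdp, hdq, hg]
  · rw [F0_eval_s₂ _ hp, F0_eval_s₁s₂ _ hq] at h; simp at h
  · rw [F0_eval_s₂ _ hp, F0_eval_s₁ _ hq] at h; simp at h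
  · rw [F0_eval_s₁s₂ _ hp, F0_eval_one _ hq] at h; simp at h
  · rw [F0_eval_s₁s₂ _ hp, F0_eval_s₂ _ hq] at h; simp at h
  · -- both s₁s₂
    rw [F0_eval_s₁s₂ _ hp, F0_eval_s₁s₂ _ hq] at h
    simp only [Sum.inr.injEq, Sum.inl.injEq] at h
    obtain ⟨g, hg⟩ := Quotient.exact h
    simp only [z2smul_def] at hg
    have hdp := fix_s₁s₂ p hp
    have hdq := fix_s₁s₂ q hq
    rcases zcases (Multiplicative.toAdd g) with h1 | h1
    · rw [if_pos h1] at hg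
      refine ⟨1, Subtype.ext ?_⟩
      rw [xt_smul_val]
      refine Prod.ext (hq.trans hp.symm) (Prod.ext ?_ ?_)
      · simpa [kleinSmul] using hg
      · simp [kleinSmul, hdp, hdq, hg]
    · rw [if_neg (by rw [h1]; decide)] at hg
      refine ⟨s₂, Subtype.ext ?_⟩
      rw [xt_smul_val]
      refine Prod.ext (hq.trans hp.symm) (Prod.ext ?_ ?_)
      · simp [kleinSmul, s₂, show (1 : ZMod 2) ≠ 0 by decide, hdq, hg]
      · simp [kleinSmul, s₂, show (1 : ZMod 2) ≠ 0 by decide, hdp, hdq, ← hg]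
  · rw [F0_eval_s₁s₂ _ hp, F0_eval_s₁ _ hq] at h; simp at h
  · rw [F0_eval_s₁ _ hp, F0_eval_one _ hq] at h; simp at h
  · rw [F0_eval_s₁ _ hp, F0_eval_s₂ _ hq] at h; simp at h
  · rw [F0_eval_s₁ _ hp, F0_eval_s₁s₂ _ hq] at h; simp at h
  · -- both s₁
    rw [F0_eval_s₁ _ hp, F0_eval_s₁ _ hq] at h
    simp only [Sum.inr.injEq] at h
    obtain ⟨hp1, hp2⟩ := fix_s₁ p hp
    obtain ⟨hq1, hq2⟩ := fix_s₁ q hq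
    have key : p.val.2 = q.val.2 ∨ p.val.2 = (q.val.2.2, q.val.2.1) := by
      rcases unit_pm _ hp1 with e1 | e1 <;> rcases unit_pm _ hp2 with e2 | e2 <;>
        rcases unit_pm _ hq1 with e3 | e3 <;> rcases unit_pm _ hq2 with e4 | e4 <;>
          simp only [c, e1, e2, e3, e4, neg_one_ne_one,
            Prod.ext_iff] at h ⊢ <;>
            simp_all
    rcases key with e | e
    · refine ⟨1, Subtype.ext ?_⟩
      rw [xt_smul_val]
      refine Prod.ext (hq.trans hp.symm) ?_
      have h1 : kleinSmul 1 q.val.2 = q.val.2 := by simp [kleinSmul]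
      rw [h1]; exact e.symm
    · refine ⟨s₂, Subtype.ext ?_⟩
      rw [xt_smul_val]
      refine Prod.ext (hq.trans hp.symm) ?_
      have h1 : kleinSmul s₂ q.val.2 = (q.val.2.2, q.val.2.1) := by
        simp [kleinSmul, s₂, show (1 : ZMod 2) ≠ 0 by decide]
      rw [h1]; exact e.symm

lemma F_surj : Function.Surjective F := by
  rintro (t | t | t | i)
  · refine Quotient.inductionOn t (fun d => ?_)
    refine ⟨Quotient.mk _ ⟨(1, d), ?_⟩, ?_⟩
    · show kleinSmul 1 d = d
      simp [kleinSmul]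
    · exact F0_eval_one _ rfl
  · refine Quotient.inductionOn t (fun x => ?_)
    refine ⟨Quotient.mk _ ⟨(s₂, (x, x)), ?_⟩, ?_⟩
    · show kleinSmul s₂ (x, x) = (x, x)
      simp [kleinSmul, s₂, show (1 : ZMod 2) ≠ 0 by decide]
    · exact F0_eval_s₂ _ rfl
  · refine Quotient.inductionOn t (fun x => ?_)
    refine ⟨Quotient.mk _ ⟨(s₁ * s₂, (x, x⁻¹)), ?_⟩, ?_⟩
    · show kleinSmul (s₁ * s₂) (x, x⁻¹) = (x, x⁻¹)
      simp [kleinSmul, s₁, s₂, show (1 : ZMod 2) ≠ 0 by decide]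
    · exact F0_eval_s₁s₂ _ rfl
  · have hpt : ∀ d : D, kleinSmul s₁ d = d → ∃ p : Xtilde W D,
        p.val.1 = s₁ ∧ p.val.2 = d := fun d hd => ⟨⟨(s₁, d), hd⟩, rfl, rfl⟩
    fin_cases i
    · obtain ⟨p, hp1, hp2⟩ := hpt (1, 1) (by
        simp [kleinSmul, s₁, show (1 : ZMod 2) ≠ 0 by decide])
      refine ⟨Quotient.mk _ p, ?_⟩
      rw [F_mk, F0_eval_s₁ _ hp1, hp2]
      simp [c]
    · obtain ⟨p, hp1, hp2⟩ := hpt (-1, -1) (by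
        simp [kleinSmul, s₁, show (1 : ZMod 2) ≠ 0 by decide])
      refine ⟨Quotient.mk _ p, ?_⟩
      rw [F_mk, F0_eval_s₁ _ hp1, hp2]
      simp [c, neg_one_ne_one]
    · obtain ⟨p, hp1, hp2⟩ := hpt (1, -1) (by
        simp [kleinSmul, s₁, show (1 : ZMod 2) ≠ 0 by decide])
      refine ⟨Quotient.mk _ p, ?_⟩
      rw [F_mk, F0_eval_s₁ _ hp1, hp2]
      simp [c, Ne.symm neg_one_ne_one]

end ExtQuotKleinAux

/-- For the Klein four-group `W = ℤ/2ℤ × ℤ/2ℤ` acting on `D = ℂˣ × ℂˣ` via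
`s₁ : (x,y) ↦ (x⁻¹,y⁻¹)` and `s₂ : (x,y) ↦ (y,x)`, the extended quotient `D//W` is in
bijection with the disjoint union of `D/W`, the quotient of the diagonal `{(λ,λ)}` by
`λ ↦ λ⁻¹`, the quotient of the antidiagonal `{(λ,λ⁻¹)}` by `λ ↦ λ⁻¹` (both of which are
copies of the quotient of `ℂˣ` by inversion), and three points. -/
theorem extQuot_klein :
    Nonempty (ExtQuot (Multiplicative (ZMod 2) × Multiplicative (ZMod 2)) (ℂˣ × ℂˣ) ≃
      (OrdQuot (Multiplicative (ZMod 2) × Multiplicative (ZMod 2)) (ℂˣ × ℂˣ) ⊕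
        OrdQuot (Multiplicative (ZMod 2)) ℂˣ ⊕
        OrdQuot (Multiplicative (ZMod 2)) ℂˣ ⊕
        Fin 3)) := by
  exact ⟨Equiv.ofBijective ExtQuotKleinAux.F ⟨ExtQuotKleinAux.F_inj, ExtQuotKleinAux.F_surj⟩⟩
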